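/- If L is generic and satisfies the triangle inequality, then the number of vertices of Γ(L) is at least 2^{n−1} − 2; that is, among all generic n-linkages satisfying the triangle inequality, the n-bow has the minimal possible number of vertices. -/

import Mathlib

open Finset

/-- `I ⊆ [n]` is *short*: the sum of its lengths is less than that of its complement. -/
def ShortSet {n : ℕ} (L : Fin n → ℝ) (I : Finset (Fin n)) : Prop :=
  ∑ i ∈ I, L i < ∑ i ∈ Iᶜ, L i

/-- `I ⊆ [n]` is *long*: the sum of its lengths is greater than that of its complement. -/
def LongSet {n : ℕ} (L : Fin n → ℝ) (I : Finset (Fin n)) : Prop :=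
  ∑ i ∈ Iᶜ, L i < ∑ i ∈ I, L i

/-- The length vector `L` is *generic*. -/
def GenericVec {n : ℕ} (L : Fin n → ℝ) : Prop :=
  ∀ I : Finset (Fin n), ∑ i ∈ I, L i ≠ ∑ i ∈ Iᶜ, L i

/-- `L` satisfies the triangle inequality: every singleton is short. -/
def TriangleIneq {n : ℕ} (L : Fin n → ℝ) : Prop :=
  ∀ i : Fin n, ShortSet L {i}

/-- Ordered triples of subsets of `[n]`. -/
abbrev LTriple (n : ℕ) := Finset (Fin n) × Finset (Fin n) × Finset (Fin n)

/-- An ordered triple `(I, J, K)` representing a vertex of `Γ(L)`: three pairwise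
disjoint nonempty short sets whose union is `[n]`. -/
def IsVertex {n : ℕ} (L : Fin n → ℝ) (V : LTriple n) : Prop :=
  V.1.Nonempty ∧ V.2.1.Nonempty ∧ V.2.2.Nonempty ∧
  ShortSet L V.1 ∧ ShortSet L V.2.1 ∧ ShortSet L V.2.2 ∧
  Disjoint V.1 V.2.1 ∧ Disjoint V.1 V.2.2 ∧ Disjoint V.2.1 V.2.2 ∧
  V.1 ∪ V.2.1 ∪ V.2.2 = Finset.univ

/-- Cyclic rotation of an ordered triple. -/
def rotT {n : ℕ} (V : LTriple n) : LTriple n := (V.2.1, V.2.2, V.1)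

/-- Two ordered triples represent the same cyclically ordered partition
(`(I,J,K)`, `(J,K,I)` and `(K,I,J)` are identified). -/
def CyclEq {n : ℕ} (V W : LTriple n) : Prop :=
  W = V ∨ W = rotT V ∨ W = rotT (rotT V)

/-- The mirror image of the vertex `(I, J, K)` is the vertex `(J, I, K)`. -/
def mirrorT {n : ℕ} (V : LTriple n) : LTriple n := (V.2.1, V.1, V.2.2)

/-- The elementary move on representatives: shift a nonempty proper subset
`S ⊊ I` to the second part, provided `J ∪ S` stays short. -/
def MoveStep {n : ℕ} (L : Fin n → ℝ) (V W : LTriple n) : Prop :=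
  ∃ S : Finset (Fin n), S.Nonempty ∧ S ⊂ V.1 ∧ ShortSet L (V.2.1 ∪ S) ∧
    W = (V.1 \ S, V.2.1 ∪ S, V.2.2)

/-- Adjacency in `Γ(L)`: one of the two vertices has a representative from which an
elementary move leads to a representative of the other. -/
def GammaAdj {n : ℕ} (L : Fin n → ℝ) (V W : LTriple n) : Prop :=
  (∃ V' W' : LTriple n, CyclEq V V' ∧ MoveStep L V' W' ∧ CyclEq W W') ∨
  (∃ W' V' : LTriple n, CyclEq W W' ∧ MoveStep L W' V' ∧ CyclEq V V')

/-- There is a path of length `m` (i.e. with `m` consecutive edges) in `Γ(L)`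
from the vertex `V` to the vertex `W`. -/
def GammaPath {n : ℕ} (L : Fin n → ℝ) (m : ℕ) (V W : LTriple n) : Prop :=
  ∃ f : ℕ → LTriple n, CyclEq V (f 0) ∧ CyclEq W (f m) ∧
    (∀ i ≤ m, IsVertex L (f i)) ∧ ∀ i < m, GammaAdj L (f i) (f (i + 1))

open scoped Classical in
/-- The finset of ordered triples representing vertices of `Γ(L)`; the number of
vertices of `Γ(L)` is one third of its cardinality. -/
noncomputable def vertexTriples {n : ℕ} (L : Fin n → ℝ) : Finset (LTriple n) :=
  Finset.univ.filter (fun V => IsVertex L V)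


section AuxLemmas

open scoped Classical

variable {n : ℕ}

lemma short_of_subset {L : Fin n → ℝ} (hpos : ∀ i, 0 < L i) {I J : Finset (Fin n)}
    (hIJ : I ⊆ J) (hJ : ShortSet L J) : ShortSet L I := by
  have h1 := Finset.sum_add_sum_compl I L
  have h2 := Finset.sum_add_sum_compl J L
  have h3 : ∑ i ∈ I, L i ≤ ∑ i ∈ J, L i :=
    Finset.sum_le_sum_of_subset_of_nonneg hIJ (fun i _ _ => (hpos i).le)
  unfold ShortSet at *
  linarith

lemma long_of_not_short {L : Fin n → ℝ} (hgen : GenericVec L) {I : Finset (Fin n)}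
    (h : ¬ ShortSet L I) : LongSet L I :=
  lt_of_le_of_ne (not_lt.mp h) (hgen I).symm

lemma short_compl_of_long {L : Fin n → ℝ} {I : Finset (Fin n)} (h : LongSet L I) :
    ShortSet L Iᶜ := by
  unfold ShortSet
  rw [compl_compl]
  exact h

lemma long_nonempty {L : Fin n → ℝ} (hpos : ∀ i, 0 < L i) {A : Finset (Fin n)}
    (h : LongSet L A) : A.Nonempty := by
  rcases A.eq_empty_or_nonempty with rfl | hne
  · unfold LongSet at h
    rw [Finset.compl_empty, Finset.sum_empty] at h
    have : (0:ℝ) ≤ ∑ i : Fin n, L i := Finset.sum_nonneg (fun i _ => (hpos i).le)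
    linarith
  · exact hne

lemma long_one_lt_card {L : Fin n → ℝ} (hpos : ∀ i, 0 < L i) (htri : TriangleIneq L)
    {A : Finset (Fin n)} (h : LongSet L A) : 1 < A.card := by
  obtain ⟨a, ha⟩ := long_nonempty hpos h
  by_contra hc
  push_neg at hc
  have hA : A = {a} := by
    apply Finset.eq_singleton_iff_unique_mem.mpr
    exact ⟨ha, fun b hb => Finset.card_le_one.mp hc b hb a ha⟩
  rw [hA] at h
  exact absurd (htri a) (not_lt.mpr h.le)

lemma exists_split {L : Fin n → ℝ} (hpos : ∀ i, 0 < L i) (hgen : GenericVec L)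
    (htri : TriangleIneq L) {m : Fin n} (hmax : ∀ i, L i ≤ L m) {A : Finset (Fin n)}
    (hAm : m ∉ A) (hA : LongSet L A) :
    ∃ p : Finset (Fin n) × Finset (Fin n), p.1.Nonempty ∧ p.2.Nonempty ∧
      Disjoint p.1 p.2 ∧ p.1 ∪ p.2 = A ∧ ShortSet L p.1 ∧ ShortSet L p.2 := by
  obtain ⟨a0, ha0⟩ := long_nonempty hpos hA
  have hAcard := long_one_lt_card hpos htri hA
  set S := A.powerset.filter (fun T => T.Nonempty ∧ T ≠ A ∧ ShortSet L T) with hSdef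
  have hSne : S.Nonempty := by
    refine ⟨{a0}, ?_⟩
    rw [hSdef, Finset.mem_filter, Finset.mem_powerset]
    refine ⟨Finset.singleton_subset_iff.mpr ha0, Finset.singleton_nonempty a0, ?_, htri a0⟩
    intro h
    rw [← h] at hAcard
    simp at hAcard
  obtain ⟨A1, hA1S, hA1max⟩ := Finset.exists_max_image S (fun T => ∑ i ∈ T, L i) hSne
  rw [hSdef, Finset.mem_filter, Finset.mem_powerset] at hA1S
  obtain ⟨hA1sub, hA1ne, hA1neq, hA1short⟩ := hA1S
  have hA2ne : (A \ A1).Nonempty :=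
    Finset.sdiff_nonempty.mpr (fun hsub => hA1neq (Finset.Subset.antisymm hA1sub hsub))
  have hdisj : Disjoint A1 (A \ A1) := Finset.disjoint_sdiff
  have hun : A1 ∪ (A \ A1) = A := Finset.union_sdiff_of_subset hA1sub
  refine ⟨(A1, A \ A1), hA1ne, hA2ne, hdisj, hun, hA1short, ?_⟩
  by_contra hns
  have hlong := long_of_not_short hgen hns
  obtain ⟨a, haA2⟩ := long_nonempty hpos hlong
  have h2 : 1 < (A \ A1).card := long_one_lt_card hpos htri hlong
  obtain ⟨b, hbA2, hba⟩ := Finset.exists_mem_ne h2 a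
  have haA : a ∈ A := (Finset.mem_sdiff.mp haA2).1
  have haA1 : a ∉ A1 := (Finset.mem_sdiff.mp haA2).2
  have hins_sub : insert a A1 ⊆ A := Finset.insert_subset haA hA1sub
  have hins_ne : insert a A1 ≠ A := by
    intro h
    have hbA : b ∈ A := (Finset.mem_sdiff.mp hbA2).1
    have hbA1 : b ∉ A1 := (Finset.mem_sdiff.mp hbA2).2
    rw [← h, Finset.mem_insert] at hbA
    rcases hbA with h' | h'
    · exact hba h'
    · exact hbA1 h'
  have hins_notshort : ¬ ShortSet L (insert a A1) := by
    intro hshort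
    have hmem : insert a A1 ∈ S := by
      rw [hSdef, Finset.mem_filter, Finset.mem_powerset]
      exact ⟨hins_sub, Finset.insert_nonempty a A1, hins_ne, hshort⟩
    have hle := hA1max _ hmem
    rw [Finset.sum_insert haA1] at hle
    linarith [hpos a]
  have hinslong := long_of_not_short hgen hins_notshort
  have e1 := Finset.sum_add_sum_compl (A \ A1) L
  have e2 := Finset.sum_add_sum_compl (insert a A1) L
  have e3 := Finset.sum_add_sum_compl A L
  have e4 : ∑ i ∈ insert a A1, L i = L a + ∑ i ∈ A1, L i := Finset.sum_insert haA1
  have e5 : ∑ i ∈ A1, L i + ∑ i ∈ A \ A1, L i = ∑ i ∈ A, L i := by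
    rw [← Finset.sum_union hdisj, hun]
  have e6 : L m ≤ ∑ i ∈ Aᶜ, L i :=
    Finset.single_le_sum (f := L) (fun i _ => (hpos i).le) (Finset.mem_compl.mpr hAm)
  have e7 : L a ≤ L m := hmax a
  unfold LongSet at hlong hinslong hA
  linarith

/-- A canonical split of a long set into two short halves. -/
noncomputable def splitPair (L : Fin n → ℝ) (A : Finset (Fin n)) :
    Finset (Fin n) × Finset (Fin n) :=
  if h : ∃ p : Finset (Fin n) × Finset (Fin n), p.1.Nonempty ∧ p.2.Nonempty ∧
      Disjoint p.1 p.2 ∧ p.1 ∪ p.2 = A ∧ ShortSet L p.1 ∧ ShortSet L p.2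
  then h.choose else (∅, ∅)

lemma splitPair_spec {L : Fin n → ℝ} (hpos : ∀ i, 0 < L i) (hgen : GenericVec L)
    (htri : TriangleIneq L) {m : Fin n} (hmax : ∀ i, L i ≤ L m) {A : Finset (Fin n)}
    (hAm : m ∉ A) (hA : LongSet L A) :
    (splitPair L A).1.Nonempty ∧ (splitPair L A).2.Nonempty ∧
      Disjoint (splitPair L A).1 (splitPair L A).2 ∧
      (splitPair L A).1 ∪ (splitPair L A).2 = A ∧
      ShortSet L (splitPair L A).1 ∧ ShortSet L (splitPair L A).2 := by
  have h := exists_split hpos hgen htri hmax hAm hA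
  rw [splitPair, dif_pos h]
  exact h.choose_spec

attribute [irreducible] splitPair

/-- Canonical vertex triple associated to a proper nonempty subset `A` of `[n] \ {m}`. -/
noncomputable def tA (L : Fin n → ℝ) (m : Fin n) (A : Finset (Fin n)) : LTriple n :=
  if ShortSet L A then
    if ShortSet L (Finset.univ.erase m \ A) then (A, Finset.univ.erase m \ A, {m})
    else ((splitPair L (Finset.univ.erase m \ A)).2, (splitPair L (Finset.univ.erase m \ A)).1,
      insert m A)
  else ((splitPair L A).1, (splitPair L A).2, insert m (Finset.univ.erase m \ A))

lemma insert_sdiff_compl {m : Fin n} {X : Finset (Fin n)} (hX : X ⊆ Finset.univ.erase m) :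
    insert m X = (Finset.univ.erase m \ X)ᶜ := by
  have hmX : m ∉ X := fun h => (Finset.notMem_erase m Finset.univ) (hX h)
  ext x
  simp only [Finset.mem_insert, Finset.mem_compl, Finset.mem_sdiff, Finset.mem_erase,
    Finset.mem_univ, and_true, true_and]
  constructor
  · rintro (rfl | hx) ⟨hxm, hxX⟩
    · exact hxm rfl
    · exact hxX hx
  · intro h
    by_cases hxm : x = m
    · exact Or.inl hxm
    · exact Or.inr (by_contra fun hxX => h ⟨hxm, hxX⟩)

end AuxLemmas

section MainLemmas

open scoped Classical

variable {n : ℕ}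

lemma tA_eq1 {L : Fin n → ℝ} {m : Fin n} {A : Finset (Fin n)} (h1 : ShortSet L A)
    (h2 : ShortSet L (Finset.univ.erase m \ A)) :
    tA L m A = (A, Finset.univ.erase m \ A, ({m} : Finset (Fin n))) := by
  rw [tA, if_pos h1, if_pos h2]

lemma tA_eq2 {L : Fin n → ℝ} {m : Fin n} {A : Finset (Fin n)} (h1 : ShortSet L A)
    (h2 : ¬ ShortSet L (Finset.univ.erase m \ A)) :
    tA L m A = ((splitPair L (Finset.univ.erase m \ A)).2,
      (splitPair L (Finset.univ.erase m \ A)).1, insert m A) := by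
  rw [tA, if_pos h1, if_neg h2]

lemma tA_eq3 {L : Fin n → ℝ} {m : Fin n} {A : Finset (Fin n)} (h1 : ¬ ShortSet L A) :
    tA L m A = ((splitPair L A).1, (splitPair L A).2,
      insert m (Finset.univ.erase m \ A)) := by
  rw [tA, if_neg h1]

attribute [irreducible] tA

lemma isVertex_rot {L : Fin n → ℝ} {V : LTriple n} (h : IsVertex L V) :
    IsVertex L (rotT V) := by
  obtain ⟨h1, h2, h3, h4, h5, h6, h7, h8, h9, h10⟩ := h
  refine ⟨h2, h3, h1, h5, h6, h4, h9, h7.symm, h8.symm, ?_⟩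
  show V.2.1 ∪ V.2.2 ∪ V.1 = Finset.univ
  rw [Finset.union_comm, ← Finset.union_assoc]
  exact h10

variable {L : Fin n → ℝ} {m : Fin n} {A : Finset (Fin n)}

lemma basic_facts (hA1 : A ⊆ Finset.univ.erase m) (hA3 : A ≠ Finset.univ.erase m) :
    m ∉ A ∧ (Finset.univ.erase m \ A) ⊆ Finset.univ.erase m ∧ m ∉ (Finset.univ.erase m \ A) ∧
    (Finset.univ.erase m \ A).Nonempty ∧ A ∪ (Finset.univ.erase m \ A) = Finset.univ.erase m ∧
    Disjoint A (Finset.univ.erase m \ A) ∧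
    Finset.univ.erase m \ (Finset.univ.erase m \ A) = A ∧
    insert m A = (Finset.univ.erase m \ A)ᶜ ∧
    insert m (Finset.univ.erase m \ A) = Aᶜ := by
  have hmA : m ∉ A := fun h => (Finset.notMem_erase m Finset.univ) (hA1 h)
  have hBsub : (Finset.univ.erase m \ A) ⊆ Finset.univ.erase m := Finset.sdiff_subset
  have hmB : m ∉ (Finset.univ.erase m \ A) :=
    fun h => (Finset.notMem_erase m Finset.univ) (hBsub h)
  have hMcB : Finset.univ.erase m \ (Finset.univ.erase m \ A) = A := by
    rw [Finset.sdiff_sdiff_self_left]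
    exact Finset.inter_eq_right.mpr hA1
  have hcomplA : insert m (Finset.univ.erase m \ A) = Aᶜ := by
    conv_rhs => rw [← hMcB]
    exact insert_sdiff_compl hBsub
  exact ⟨hmA, hBsub, hmB,
    Finset.sdiff_nonempty.mpr (fun hsub => hA3 (Finset.Subset.antisymm hA1 hsub)),
    Finset.union_sdiff_of_subset hA1, Finset.disjoint_sdiff, hMcB, insert_sdiff_compl hA1,
    hcomplA⟩

lemma tA_vertex (hpos : ∀ i, 0 < L i) (hgen : GenericVec L) (htri : TriangleIneq L)
    (hmax : ∀ i, L i ≤ L m) (hA1 : A ⊆ Finset.univ.erase m) (hA2 : A.Nonempty)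
    (hA3 : A ≠ Finset.univ.erase m) :
    IsVertex L (tA L m A) ∧ m ∈ (tA L m A).2.2 ∧ m ∉ (tA L m A).1 ∧ m ∉ (tA L m A).2.1 := by
  obtain ⟨hmA, hBsub, hmB, hBne, hunAB, hdisjAB, hMcB, hcomplB, hcomplA⟩ := basic_facts hA1 hA3
  have hMcm : Finset.univ.erase m ∪ {m} = Finset.univ := by
    rw [Finset.union_comm, ← Finset.insert_eq, Finset.insert_erase (Finset.mem_univ m)]
  by_cases hSA : ShortSet L A
  · by_cases hSB : ShortSet L (Finset.univ.erase m \ A)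
    · rw [tA_eq1 hSA hSB]
      refine ⟨⟨hA2, hBne, Finset.singleton_nonempty m, hSA, hSB, htri m, hdisjAB,
        Finset.disjoint_singleton_right.mpr hmA, Finset.disjoint_singleton_right.mpr hmB, ?_⟩,
        Finset.mem_singleton_self m, hmA, hmB⟩
      show A ∪ (Finset.univ.erase m \ A) ∪ {m} = Finset.univ
      rw [hunAB, hMcm]
    · have hBlong := long_of_not_short hgen hSB
      obtain ⟨hp1, hp2, hpd, hpu, hps1, hps2⟩ := splitPair_spec hpos hgen htri hmax hmB hBlong
      have hsub1 : (splitPair L (Finset.univ.erase m \ A)).1 ⊆ Finset.univ.erase m \ A := by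
        have h := Finset.subset_union_left (s₁ := (splitPair L (Finset.univ.erase m \ A)).1)
          (s₂ := (splitPair L (Finset.univ.erase m \ A)).2)
        rwa [hpu] at h
      have hsub2 : (splitPair L (Finset.univ.erase m \ A)).2 ⊆ Finset.univ.erase m \ A := by
        have h := Finset.subset_union_right (s₁ := (splitPair L (Finset.univ.erase m \ A)).1)
          (s₂ := (splitPair L (Finset.univ.erase m \ A)).2)
        rwa [hpu] at h
      have hshortIns : ShortSet L (insert m A) := by
        rw [hcomplB]; exact short_compl_of_long hBlong
      rw [tA_eq2 hSA hSB]
      refine ⟨⟨hp2, hp1, Finset.insert_nonempty m A, hps2, hps1, hshortIns, hpd.symm,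
        ?_, ?_, ?_⟩, Finset.mem_insert_self m A, fun h => hmB (hsub2 h), fun h => hmB (hsub1 h)⟩
      · rw [hcomplB]
        exact disjoint_compl_right.mono_left hsub2
      · rw [hcomplB]
        exact disjoint_compl_right.mono_left hsub1
      · show (splitPair L (Finset.univ.erase m \ A)).2 ∪
            (splitPair L (Finset.univ.erase m \ A)).1 ∪ insert m A = Finset.univ
        rw [Finset.union_comm (splitPair L (Finset.univ.erase m \ A)).2
          (splitPair L (Finset.univ.erase m \ A)).1, hpu, hcomplB, Finset.union_compl]
  · have hAlong := long_of_not_short hgen hSA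
    obtain ⟨hp1, hp2, hpd, hpu, hps1, hps2⟩ := splitPair_spec hpos hgen htri hmax hmA hAlong
    have hsub1 : (splitPair L A).1 ⊆ A := by
      have h := Finset.subset_union_left (s₁ := (splitPair L A).1) (s₂ := (splitPair L A).2)
      rwa [hpu] at h
    have hsub2 : (splitPair L A).2 ⊆ A := by
      have h := Finset.subset_union_right (s₁ := (splitPair L A).1) (s₂ := (splitPair L A).2)
      rwa [hpu] at h
    have hshortIns : ShortSet L (insert m (Finset.univ.erase m \ A)) := by
      rw [hcomplA]; exact short_compl_of_long hAlong
    rw [tA_eq3 hSA]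
    refine ⟨⟨hp1, hp2, Finset.insert_nonempty m _, hps1, hps2, hshortIns, hpd,
      ?_, ?_, ?_⟩, Finset.mem_insert_self m _, fun h => hmA (hsub1 h), fun h => hmA (hsub2 h)⟩
    · rw [hcomplA]
      exact disjoint_compl_right.mono_left hsub1
    · rw [hcomplA]
      exact disjoint_compl_right.mono_left hsub2
    · show (splitPair L A).1 ∪ (splitPair L A).2 ∪
          insert m (Finset.univ.erase m \ A) = Finset.univ
      rw [hpu, hcomplA, Finset.union_compl]

end MainLemmas

section InjLemmas

open scoped Classical

variable {n : ℕ}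

lemma ne_of_disjoint' {α : Type*} {s t : Finset α} (hs : s.Nonempty) (hd : Disjoint s t) :
    s ≠ t := by
  intro h
  rw [← h] at hd
  rw [Finset.disjoint_self_iff_empty] at hd
  exact hs.ne_empty hd

lemma insert_inj_of_not_mem {α : Type*} [DecidableEq α] {a : α} {s t : Finset α}
    (hs : a ∉ s) (ht : a ∉ t) (h : insert a s = insert a t) : s = t := by
  rw [← Finset.erase_insert hs, ← Finset.erase_insert ht, h]

variable {L : Fin n → ℝ} {m : Fin n}

lemma singleton_absurd {X : Finset (Fin n)} (hX : X.Nonempty) (hmX : m ∉ X)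
    (h : ({m} : Finset (Fin n)) = insert m X) : False := by
  obtain ⟨a, ha⟩ := hX
  have hmem : a ∈ ({m} : Finset (Fin n)) := by
    rw [h]; exact Finset.mem_insert_of_mem ha
  rw [Finset.mem_singleton] at hmem
  exact hmX (hmem ▸ ha)

lemma tA_inj (hpos : ∀ i, 0 < L i) (hgen : GenericVec L) (htri : TriangleIneq L)
    (hmax : ∀ i, L i ≤ L m) {A A' : Finset (Fin n)}
    (hA1 : A ⊆ Finset.univ.erase m) (hA2 : A.Nonempty) (hA3 : A ≠ Finset.univ.erase m)
    (hA1' : A' ⊆ Finset.univ.erase m) (hA2' : A'.Nonempty) (hA3' : A' ≠ Finset.univ.erase m)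
    (h : tA L m A = tA L m A') : A = A' := by
  obtain ⟨hmA, hBsub, hmB, hBne, hunAB, hdisjAB, hMcB, hcomplB, hcomplA⟩ := basic_facts hA1 hA3
  obtain ⟨hmA', hBsub', hmB', hBne', hunAB', hdisjAB', hMcB', hcomplB', hcomplA'⟩ :=
    basic_facts hA1' hA3'
  by_cases hSA : ShortSet L A
  · by_cases hSB : ShortSet L (Finset.univ.erase m \ A)
    · rw [tA_eq1 hSA hSB] at h
      by_cases hSA' : ShortSet L A'
      · by_cases hSB' : ShortSet L (Finset.univ.erase m \ A')
        · rw [tA_eq1 hSA' hSB'] at h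
          simp only [Prod.mk.injEq] at h
          exact h.1
        · rw [tA_eq2 hSA' hSB'] at h
          simp only [Prod.mk.injEq] at h
          exact absurd h.2.2 (fun hh => singleton_absurd hA2' hmA' hh)
      · rw [tA_eq3 hSA'] at h
        simp only [Prod.mk.injEq] at h
        exact absurd h.2.2 (fun hh => singleton_absurd hBne' hmB' hh)
    · rw [tA_eq2 hSA hSB] at h
      by_cases hSA' : ShortSet L A'
      · by_cases hSB' : ShortSet L (Finset.univ.erase m \ A')
        · rw [tA_eq1 hSA' hSB'] at h
          simp only [Prod.mk.injEq] at h
          exact absurd h.2.2.symm (fun hh => singleton_absurd hA2 hmA hh)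
        · rw [tA_eq2 hSA' hSB'] at h
          simp only [Prod.mk.injEq] at h
          exact insert_inj_of_not_mem hmA hmA' h.2.2
      · rw [tA_eq3 hSA'] at h
        simp only [Prod.mk.injEq] at h
        exfalso
        have hAB' : A = Finset.univ.erase m \ A' := insert_inj_of_not_mem hmA hmB' h.2.2
        have hBA' : Finset.univ.erase m \ A = A' := by rw [hAB', hMcB']
        rw [hBA'] at h
        have hA'long := long_of_not_short hgen hSA'
        obtain ⟨hq1, hq2, hqd, hqu, hqs1, hqs2⟩ :=
          splitPair_spec hpos hgen htri hmax hmA' hA'long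
        exact (ne_of_disjoint' hq2 hqd.symm) h.1
  · rw [tA_eq3 hSA] at h
    have hAlong := long_of_not_short hgen hSA
    obtain ⟨hp1, hp2, hpd, hpu, hps1, hps2⟩ := splitPair_spec hpos hgen htri hmax hmA hAlong
    by_cases hSA' : ShortSet L A'
    · by_cases hSB' : ShortSet L (Finset.univ.erase m \ A')
      · rw [tA_eq1 hSA' hSB'] at h
        simp only [Prod.mk.injEq] at h
        exact absurd h.2.2.symm (fun hh => singleton_absurd hBne hmB hh)
      · rw [tA_eq2 hSA' hSB'] at h
        simp only [Prod.mk.injEq] at h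
        exfalso
        have hBA' : Finset.univ.erase m \ A = A' := insert_inj_of_not_mem hmB hmA' h.2.2
        have hE : Finset.univ.erase m \ A' = A := by rw [← hBA', hMcB]
        rw [hE] at h
        exact (ne_of_disjoint' hp1 hpd) h.1
    · rw [tA_eq3 hSA'] at h
      simp only [Prod.mk.injEq] at h
      have hA'long := long_of_not_short hgen hSA'
      obtain ⟨hq1, hq2, hqd, hqu, hqs1, hqs2⟩ :=
        splitPair_spec hpos hgen htri hmax hmA' hA'long
      rw [← hpu, ← hqu, h.1, h.2.1]

/-- The injection `{0,1,2} × 𝒜 → LTriple n`. -/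
noncomputable def fMap (L : Fin n → ℝ) (m : Fin n) (p : ℕ × Finset (Fin n)) : LTriple n :=
  if p.1 = 0 then tA L m p.2
  else if p.1 = 1 then rotT (tA L m p.2)
  else rotT (rotT (tA L m p.2))

end InjLemmas

/-- If `L` is generic and satisfies the triangle inequality, then the
number of vertices of `Γ(L)` is at least `2^{n−1} − 2` (the `n`-bow has the minimal
possible number of vertices); equivalently the number of ordered vertex triples is at
least `3·(2^{n−1} − 2)`. -/
theorem num_vertices_lower_bound (n : ℕ) (hn : 3 ≤ n) (L : Fin n → ℝ)
    (hpos : ∀ i, 0 < L i) (hgen : GenericVec L) (htri : TriangleIneq L) :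
    3 * (2 ^ (n - 1) - 2) ≤ (vertexTriples L).card := by
  classical
  have hne : (Finset.univ : Finset (Fin n)).Nonempty :=
    ⟨⟨0, by omega⟩, Finset.mem_univ _⟩
  obtain ⟨m, -, hmax'⟩ := Finset.exists_max_image Finset.univ L hne
  have hmax : ∀ i, L i ≤ L m := fun i => hmax' i (Finset.mem_univ i)
  set 𝒜 := (((Finset.univ.erase m).powerset.erase ∅).erase (Finset.univ.erase m)) with h𝒜
  have hMccard : (Finset.univ.erase m).card = n - 1 := by
    rw [Finset.card_erase_of_mem (Finset.mem_univ m), Finset.card_univ, Fintype.card_fin]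
  have hMcne : (Finset.univ.erase m : Finset (Fin n)) ≠ ∅ := by
    apply Finset.nonempty_iff_ne_empty.mp
    rw [← Finset.card_pos, hMccard]
    omega
  have hcard : 𝒜.card = 2 ^ (n - 1) - 2 := by
    rw [h𝒜, Finset.card_erase_of_mem, Finset.card_erase_of_mem (Finset.empty_mem_powerset _),
      Finset.card_powerset, hMccard]
    · omega
    · rw [Finset.mem_erase]
      exact ⟨hMcne, Finset.mem_powerset_self _⟩
  have hmem𝒜 : ∀ A ∈ 𝒜, A ⊆ Finset.univ.erase m ∧ A.Nonempty ∧ A ≠ Finset.univ.erase m := by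
    intro A hA
    rw [h𝒜, Finset.mem_erase, Finset.mem_erase, Finset.mem_powerset] at hA
    exact ⟨hA.2.2, Finset.nonempty_iff_ne_empty.mpr hA.2.1, hA.1⟩
  have hDcard : (({0, 1, 2} : Finset ℕ) ×ˢ 𝒜).card = 3 * (2 ^ (n - 1) - 2) := by
    rw [Finset.card_product, hcard]
    norm_num
  rw [← hDcard]
  apply Finset.card_le_card_of_injOn (fMap L m)
  · rintro ⟨σ, A⟩ hp
    rw [Finset.mem_coe, Finset.mem_product] at hp
    obtain ⟨hsub, hAne, hAneq⟩ := hmem𝒜 _ hp.2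
    have hV := (tA_vertex hpos hgen htri hmax hsub hAne hAneq).1
    rw [Finset.mem_coe, vertexTriples, Finset.mem_filter]
    refine ⟨Finset.mem_univ _, ?_⟩
    have hσ := hp.1
    rw [Finset.mem_insert, Finset.mem_insert, Finset.mem_singleton] at hσ
    rcases hσ with rfl | rfl | rfl
    · simp only [fMap]
      norm_num
      exact hV
    · simp only [fMap]
      norm_num
      exact isVertex_rot hV
    · simp only [fMap]
      norm_num
      exact isVertex_rot (isVertex_rot hV)
  · rintro ⟨σ, A⟩ hp ⟨τ, A'⟩ hp' heq
    rw [Finset.mem_coe, Finset.mem_product] at hp hp'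
    obtain ⟨hsub, hAne, hAneq⟩ := hmem𝒜 _ hp.2
    obtain ⟨hsub', hAne', hAneq'⟩ := hmem𝒜 _ hp'.2
    obtain ⟨-, hm1, hm2, hm3⟩ := tA_vertex hpos hgen htri hmax hsub hAne hAneq
    obtain ⟨-, hm1', hm2', hm3'⟩ := tA_vertex hpos hgen htri hmax hsub' hAne' hAneq'
    have hinj : tA L m A = tA L m A' → A = A' := fun hh =>
      tA_inj hpos hgen htri hmax hsub hAne hAneq hsub' hAne' hAneq' hh
    have hσ := hp.1
    have hτ := hp'.1
    rw [Finset.mem_insert, Finset.mem_insert, Finset.mem_singleton] at hσ hτ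
    rcases hσ with rfl | rfl | rfl <;> rcases hτ with rfl | rfl | rfl <;>
      simp only [fMap] at heq <;> norm_num at heq <;> simp only [Prod.mk.injEq]
    -- (0,0)
    · exact ⟨trivial, hinj heq⟩
    -- (0,1)
    · exfalso
      have e3 := congrArg (fun v : LTriple n => v.2.2) heq
      simp only [rotT] at e3
      exact hm2' (e3 ▸ hm1)
    -- (0,2)
    · exfalso
      have e3 := congrArg (fun v : LTriple n => v.2.2) heq
      simp only [rotT] at e3
      exact hm3' (e3 ▸ hm1)
    -- (1,0)
    · exfalso
      have e3 := congrArg (fun v : LTriple n => v.2.2) heq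
      simp only [rotT] at e3
      exact hm2 (e3.symm ▸ hm1')
    -- (1,1)
    · refine ⟨trivial, hinj ?_⟩
      have e1 := congrArg (fun v : LTriple n => v.1) heq
      have e2 := congrArg (fun v : LTriple n => v.2.1) heq
      have e3 := congrArg (fun v : LTriple n => v.2.2) heq
      simp only [rotT] at e1 e2 e3
      exact Prod.ext_iff.mpr ⟨e3, Prod.ext_iff.mpr ⟨e1, e2⟩⟩
    -- (1,2)
    · exfalso
      have e2 := congrArg (fun v : LTriple n => v.2.1) heq
      simp only [rotT] at e2
      exact hm2' (e2 ▸ hm1)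
    -- (2,0)
    · exfalso
      have e1 := congrArg (fun v : LTriple n => v.1) heq
      simp only [rotT] at e1
      exact hm2' (e1 ▸ hm1)
    -- (2,1)
    · exfalso
      have e1 := congrArg (fun v : LTriple n => v.1) heq
      simp only [rotT] at e1
      exact hm3' (e1 ▸ hm1)
    -- (2,2)
    · refine ⟨trivial, hinj ?_⟩
      have e1 := congrArg (fun v : LTriple n => v.1) heq
      have e2 := congrArg (fun v : LTriple n => v.2.1) heq
      have e3 := congrArg (fun v : LTriple n => v.2.2) heq
      simp only [rotT] at e1 e2 e3
      exact Prod.ext_iff.mpr ⟨e2, Prod.ext_iff.mpr ⟨e3, e1⟩⟩
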